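/- If A and B are diagonalizable and all sums α_i + β_j of an eigenvalue α_i of A and an eigenvalue β_j of B are nonzero, then for every C ∈ ℂ^(n×m) the Sylvester equation AX + XB = C has a unique solution X ∈ ℂ^(n×m). -/

import Mathlib

open Matrix

lemma sylvester_diag_entry {n m : ℕ} (α : Fin n → ℂ) (β : Fin m → ℂ)
    (Y : Matrix (Fin n) (Fin m) ℂ) (i : Fin n) (j : Fin m) :
    (Matrix.diagonal α * Y + Y * Matrix.diagonal β) i j = (α i + β j) * Y i j := by
  simp only [Matrix.add_apply, Matrix.diagonal_mul, Matrix.mul_diagonal]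
  ring

/-- if A and B are diagonalizable and all eigenvalue sums α_i + β_j are
nonzero, then for every C the Sylvester equation AX + XB = C has a unique solution. -/
theorem stmt17 {n m : ℕ} (A U : Matrix (Fin n) (Fin n) ℂ) (B W : Matrix (Fin m) (Fin m) ℂ)
    (α : Fin n → ℂ) (β : Fin m → ℂ)
    (hU : IsUnit U.det) (hW : IsUnit W.det)
    (hA : A = U * Matrix.diagonal α * U⁻¹)
    (hB : B = W * Matrix.diagonal β * W⁻¹)
    (hαβ : ∀ i j, α i + β j ≠ 0) :
    ∀ C : Matrix (Fin n) (Fin m) ℂ, ∃! X : Matrix (Fin n) (Fin m) ℂ, A * X + X * B = C := by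
  intro C
  have hUU : U⁻¹ * U = 1 := Matrix.nonsing_inv_mul U hU
  have hUU' : U * U⁻¹ = 1 := Matrix.mul_nonsing_inv U hU
  have hWW : W⁻¹ * W = 1 := Matrix.nonsing_inv_mul W hW
  have hWW' : W * W⁻¹ = 1 := Matrix.mul_nonsing_inv W hW
  set D : Matrix (Fin n) (Fin m) ℂ := U⁻¹ * C * W with hD
  set Y : Matrix (Fin n) (Fin m) ℂ := Matrix.of fun i j => D i j / (α i + β j) with hY
  have hYD : Matrix.diagonal α * Y + Y * Matrix.diagonal β = D := by
    ext i j
    rw [sylvester_diag_entry]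
    simp only [hY, Matrix.of_apply]
    rw [mul_div_cancel₀ _ (hαβ i j)]
  -- key: for any X, the equation is equivalent to a diagonal one for Z = U⁻¹ X W
  have key : ∀ X : Matrix (Fin n) (Fin m) ℂ, A * X + X * B = C ↔
      Matrix.diagonal α * (U⁻¹ * X * W) + (U⁻¹ * X * W) * Matrix.diagonal β = D := by
    intro X
    subst hA hB
    constructor
    · intro h
      have : U⁻¹ * (U * Matrix.diagonal α * U⁻¹ * X + X * (W * Matrix.diagonal β * W⁻¹)) * W
          = U⁻¹ * C * W := by rw [h]
      calc Matrix.diagonal α * (U⁻¹ * X * W) + (U⁻¹ * X * W) * Matrix.diagonal β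
          = U⁻¹ * (U * Matrix.diagonal α * U⁻¹ * X + X * (W * Matrix.diagonal β * W⁻¹)) * W := by
            simp only [Matrix.mul_add, Matrix.add_mul, ← Matrix.mul_assoc, hUU]
            simp [Matrix.mul_assoc, hWW]
        _ = D := this
    · intro h
      have : U * (Matrix.diagonal α * (U⁻¹ * X * W) + (U⁻¹ * X * W) * Matrix.diagonal β) * W⁻¹
          = U * D * W⁻¹ := by rw [h]
      calc U * Matrix.diagonal α * U⁻¹ * X + X * (W * Matrix.diagonal β * W⁻¹)
          = U * (Matrix.diagonal α * (U⁻¹ * X * W) + (U⁻¹ * X * W) * Matrix.diagonal β) * W⁻¹ := by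
            simp only [Matrix.mul_add, Matrix.add_mul, ← Matrix.mul_assoc]
            simp [Matrix.mul_assoc, hWW', hUU']
        _ = U * D * W⁻¹ := this
        _ = C := by
            simp only [hD, ← Matrix.mul_assoc, hUU']
            simp [Matrix.mul_assoc, hWW']
  refine ⟨U * Y * W⁻¹, ?_, ?_⟩
  · show A * (U * Y * W⁻¹) + (U * Y * W⁻¹) * B = C
    rw [key]
    have : U⁻¹ * (U * Y * W⁻¹) * W = Y := by
      simp only [← Matrix.mul_assoc, hUU]
      simp [Matrix.mul_assoc, hWW]
    rw [this, hYD]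
  · intro X hX
    rw [key] at hX
    have hZ : U⁻¹ * X * W = Y := by
      ext i j
      have h1 := congrArg (fun M => M i j) hX
      replace h1 : (Matrix.diagonal α * (U⁻¹ * X * W) + (U⁻¹ * X * W) * Matrix.diagonal β) i j = D i j := h1
      rw [sylvester_diag_entry] at h1
      simp only [hY, Matrix.of_apply]
      rw [eq_div_iff (hαβ i j), mul_comm]
      exact h1
    calc X = U * (U⁻¹ * X * W) * W⁻¹ := by
            simp only [← Matrix.mul_assoc, hUU']
            simp [Matrix.mul_assoc, hWW']
      _ = U * Y * W⁻¹ := by rw [hZ]
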